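/- Let G_R be the canonical distance graph of a region R with respect to a bound function α, and let x₁, x₂ be two clocks bounded in R (i.e., a constraint x ≤ c holds in R for some constant c, for each of them). For every distance graph G: if in min(G_R, G) the weight of the edge x₁ → x₂ comes from G (i.e., is strictly smaller than the corresponding weight in G_R), then x₁ → x₂ → x₁ is a negative cycle in min(G_R, G). -/
import Mathlib


attribute [local instance] Classical.propDecidable

noncomputable section

namespace TAform

/-! ### Weights `(≼, c)` with `c ∈ ℤ ∪ {∞}` -/

/-- Values in `ℤ ∪ {∞}`: `none` represents `∞`. -/
abbrev OVal := Option ℤ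

/-- Addition on `ℤ ∪ {∞}`. -/
def ovAdd : OVal → OVal → OVal
  | some a, some b => some (a + b)
  | _, _ => none

/-- Strict order on `ℤ ∪ {∞}`. -/
def ovLt : OVal → OVal → Prop
  | some a, some b => a < b
  | some _, none => True
  | none, _ => False

/-- A weight `(≼, c)`: `strict = true` means `≼` is `<`, `strict = false` means `≤`;
`val ∈ ℤ ∪ {∞}`. -/
structure Weight where
  strict : Bool
  val : OVal

/-- The weight `(<, ∞)`. -/
def winf : Weight := ⟨true, none⟩

/-- The weight `(≤, c)`. -/
def wle (c : ℤ) : Weight := ⟨false, some c⟩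

/-- The weight `(<, c)`. -/
def wlt (c : ℤ) : Weight := ⟨true, some c⟩

/-- Addition: `(≼₁,c₁)+(≼₂,c₂) = (≼,c₁+c₂)` where `≼` is `<` iff `≼₁` or `≼₂` is `<`. -/
def Weight.add (a b : Weight) : Weight := ⟨a.strict || b.strict, ovAdd a.val b.val⟩

/-- Order: `(≼₁,c₁) < (≼₂,c₂)` iff `c₁ < c₂`, or `c₁ = c₂`, `≼₁` is `<` and `≼₂` is `≤`. -/
def Weight.lt (a b : Weight) : Prop :=
  ovLt a.val b.val ∨ (a.val = b.val ∧ a.strict = true ∧ b.strict = false)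

def Weight.le (a b : Weight) : Prop := Weight.lt a b ∨ a = b

/-- Minus: `−(≼,c) = (≼,−c)`. -/
def Weight.neg (w : Weight) : Weight := ⟨w.strict, Option.map (fun c => -c) w.val⟩

/-- Floor: `⌊(<,c)⌋ = (≤,c−1)` and `⌊(≤,c)⌋ = (≤,c)`. -/
def Weight.floor (w : Weight) : Weight :=
  ⟨false, if w.strict then Option.map (fun c => c - 1) w.val else w.val⟩

/-- Ceiling (on integer-valued weights): `⌈(≤,c)⌉ = (≤,c)` and `⌈(<,c)⌉ = (<,c+1)`. -/
def Weight.ceil (w : Weight) : Weight :=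
  if w.strict then ⟨true, Option.map (fun c => c + 1) w.val⟩ else w

/-- Maximum of two weights. -/
def Weight.max (a b : Weight) : Weight := if Weight.lt a b then b else a

/-- Satisfaction: `d ≼ c` for a real number `d` and a weight `(≼,c)`. -/
def Weight.sat (w : Weight) (d : ℝ) : Prop :=
  match w.val with
  | none => True
  | some c => if w.strict then d < (c : ℝ) else d ≤ (c : ℝ)

/-! ### Distance graphs and their semantics -/

/-- Vertices: clocks of `X` together with the special vertex `x₀` (represented by `none`). -/
abbrev Vtx (X : Type*) := Option X

/-- A distance graph: a weight for every ordered pair of vertices.  The edge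
`a →^{≼ c} b` represents the constraint `v b − v a ≼ c`. -/
abbrev DGraph (X : Type*) := Vtx X → Vtx X → Weight

/-- A clock valuation. -/
abbrev Val (X : Type*) := X → ℝ

/-- The valuation is nonnegative (clock valuations map into `ℝ≥0`). -/
def Nonneg {X : Type*} (v : Val X) : Prop := ∀ x, 0 ≤ v x

/-- Extension of a valuation to all vertices, sending `x₀` to `0`. -/
def extV {X : Type*} (v : Val X) : Vtx X → ℝ
  | none => 0
  | some x => v x

/-- Semantics of a distance graph: the set of nonnegative clock valuations
(with `x₀ = 0`) satisfying all edge constraints. -/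
def sem {X : Type*} (G : DGraph X) : Set (Val X) :=
  { v | Nonneg v ∧ ∀ a b, (G a b).sat (extV v b - extV v a) }

/-- Weight of the path `a :: l ++ [b]` in `G` (sum of the weights of its edges). -/
def pathWeight {X : Type*} (G : DGraph X) : Vtx X → List (Vtx X) → Vtx X → Weight
  | a, [], b => G a b
  | a, c :: l, b => (G a c).add (pathWeight G c l b)

/-- `G` has only positive cycles: no cycle has weight at most `(<,0)`. -/
def OnlyPositiveCycles {X : Type*} (G : DGraph X) : Prop :=
  ∀ (a : Vtx X) (l : List (Vtx X)), ¬ (pathWeight G a l a).le (wlt 0)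

/-- Canonical form: the weight of the edge from `a` to `b` is a lower bound of the
weights of all paths from `a` to `b`. -/
def PathCanonical {X : Type*} (G : DGraph X) : Prop :=
  ∀ (a b : Vtx X) (l : List (Vtx X)), (G a b).le (pathWeight G a l b)

/-- The weight `w` bounds the difference `v b − v a` over all `v ∈ S`. -/
def Bounds {X : Type*} (S : Set (Val X)) (a b : Vtx X) (w : Weight) : Prop :=
  ∀ v ∈ S, w.sat (extV v b - extV v a)

/-- `G` is the canonical distance graph of the set `S`: it represents `S` and each of
its edge weights is the least weight bounding the corresponding difference over `S`
(equivalently, for sets defined by clock constraints, the lower bound of the weights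
of paths between its endpoints). -/
def IsCanonGraph {X : Type*} (G : DGraph X) (S : Set (Val X)) : Prop :=
  sem G = S ∧ ∀ a b w, Bounds S a b w → (G a b).le w

/-- A zone: a set of valuations defined by a conjunction of constraints of the form
`x − y # c` or `x # c`, i.e. the set represented by some distance graph. -/
def IsZone {X : Type*} (Z : Set (Val X)) : Prop := ∃ G : DGraph X, sem G = Z

/-! ### Regions and closure -/

/-- Region equivalence with respect to the bound function `α`: same integer parts
(or both above the bound), same set of clocks with zero fractional part, and the
same ordering of fractional parts of bounded clocks. -/
def regEq {X : Type*} (α : X → ℕ) (v w : Val X) : Prop :=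
  (∀ x, ((α x : ℝ) < v x ∧ (α x : ℝ) < w x) ∨
    (⌊v x⌋ = ⌊w x⌋ ∧ (Int.fract (v x) = 0 ↔ Int.fract (w x) = 0))) ∧
  (∀ x y, v x ≤ (α x : ℝ) → v y ≤ (α y : ℝ) →
    (Int.fract (v x) ≤ Int.fract (v y) ↔ Int.fract (w x) ≤ Int.fract (w y)))

/-- A region with respect to `α`: an equivalence class of region equivalence
(inside the nonnegative valuations). -/
def IsRegion {X : Type*} (α : X → ℕ) (R : Set (Val X)) : Prop :=
  ∃ v : Val X, Nonneg v ∧ R = { w | Nonneg w ∧ regEq α v w }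

/-- Closure abstraction: the union of the regions (w.r.t. `α`) intersecting `S`. -/
def Closure {X : Type*} (α : X → ℕ) (S : Set (Val X)) : Set (Val X) :=
  ⋃₀ { R | IsRegion α R ∧ (R ∩ S).Nonempty }

/-! ### LU-bounds and the `Extra⁺_LU` extrapolation -/

/-- `w > (≤, l)` where `l ∈ ℕ ∪ {−∞}` (`⊥` is `−∞`). -/
def gtLB (w : Weight) (l : WithBot ℕ) : Prop :=
  ∀ n : ℕ, l = (n : WithBot ℕ) → ovLt (some (n : ℤ)) w.val

/-- `−w > (≤, l)` where `l ∈ ℕ ∪ {−∞}`. -/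
def negGtLB (w : Weight) (l : WithBot ℕ) : Prop :=
  ∃ c : ℤ, w.val = some c ∧ ∀ n : ℕ, l = (n : WithBot ℕ) → c < -(n : ℤ)

/-- The weight `(<, −u)` for `u ∈ ℕ ∪ {−∞}` (with `(<,∞)` when `u = −∞`). -/
def wltNeg (u : WithBot ℕ) : Weight :=
  ⟨true, WithBot.recBotCoe none (fun n => some (-(n : ℤ))) u⟩

/-- The `Extra⁺_{LU}` extrapolation, applied edgewise to a distance graph `G`
(the canonical graph of a zone): `Z⁺_{xy} = (<,∞)` if `Z_{xy} > (≤,L_y)`, or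
`−Z_{y0} > (≤,L_y)`, or `−Z_{x0} > (≤,U_x)` and `y ≠ x₀`;
`Z⁺_{x0} = (<,−U_x)` if `−Z_{x0} > (≤,U_x)`; and `Z⁺_{xy} = Z_{xy}` otherwise. -/
def extraLU {X : Type*} (L U : X → WithBot ℕ) (G : DGraph X) : DGraph X := fun a b =>
  match a, b with
  | some x, some y =>
      if gtLB (G (some x) (some y)) (L y) ∨ negGtLB (G (some y) none) (L y) ∨
          negGtLB (G (some x) none) (U x)
      then winf else G (some x) (some y)
  | none, some y =>
      if gtLB (G none (some y)) (L y) ∨ negGtLB (G (some y) none) (L y)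
      then winf else G none (some y)
  | some x, none =>
      if negGtLB (G (some x) none) (U x) then wltNeg (U x) else G (some x) none
  | none, none => G none none

/-! ### LU-preorder and its abstraction -/

/-- `l < r` where `l ∈ ℕ ∪ {−∞}` and `r : ℝ`. -/
def lbLtR (l : WithBot ℕ) (r : ℝ) : Prop := ∀ n : ℕ, l = (n : WithBot ℕ) → (n : ℝ) < r

/-- The LU-preorder `ν' ≼_{LU} ν`: for each clock `x`, either `ν' x = ν x`,
or `L x < ν' x < ν x`, or `U x < ν x < ν' x`. -/
def LUpre {X : Type*} (L U : X → WithBot ℕ) (ν' ν : Val X) : Prop :=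
  ∀ x, ν' x = ν x ∨ (lbLtR (L x) (ν' x) ∧ ν' x < ν x) ∨ (lbLtR (U x) (ν x) ∧ ν x < ν' x)

/-- The abstraction `a_{≼LU}(W) = { ν | ∃ ν' ∈ W, ν' ≼_{LU} ν }` (inside the
nonnegative valuations). -/
def aLU {X : Type*} (L U : X → WithBot ℕ) (W : Set (Val X)) : Set (Val X) :=
  { ν | Nonneg ν ∧ ∃ ν' ∈ W, LUpre L U ν' ν }

/-! ### Guards, transitions, timed automata -/

/-- Comparison operators `# ∈ {<, ≤, =, ≥, >}`. -/
inductive Cmp | lt | le | eq | ge | gt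
deriving DecidableEq

/-- Satisfaction of a comparison by real numbers. -/
def Cmp.sat : Cmp → ℝ → ℝ → Prop
  | .lt, a, b => a < b
  | .le, a, b => a ≤ b
  | .eq, a, b => a = b
  | .ge, a, b => a ≥ b
  | .gt, a, b => a > b

/-- A clock constraint (guard): a conjunction (list) of constraints `x # c`, `c ∈ ℕ`. -/
abbrev Guard (X : Type*) := List (X × Cmp × ℕ)

/-- `v ⊨ g`: every conjunct of the guard holds. -/
def gsat {X : Type*} (v : Val X) (g : Guard X) : Prop :=
  ∀ p ∈ g, Cmp.sat p.2.1 (v p.1) (p.2.2 : ℝ)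

/-- `[R]v`: reset the clocks in `R` to `0`, leaving the others unchanged. -/
def resetVal {X : Type*} (R : Set X) (v : Val X) : Val X := Set.indicator Rᶜ v

/-- One step `ν →^{δ,t} ν'` for a transition with guard `g` and reset set `R`:
`ν + δ ⊨ g` and `ν' = [R](ν + δ)`. -/
def step {X : Type*} (g : Guard X) (R : Set X) (δ : ℝ) (ν ν' : Val X) : Prop :=
  0 ≤ δ ∧ gsat (fun x => ν x + δ) g ∧ ν' = resetVal R (fun x => ν x + δ)

/-- `Post(S,t)`: all valuations reachable by the transition from valuations in `S`. -/
def Post {X : Type*} (g : Guard X) (R : Set X) (S : Set (Val X)) : Set (Val X) :=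
  { ν' | ∃ ν ∈ S, ∃ δ : ℝ, step g R δ ν ν' }

/-- A timed automaton `(Q, q₀, X, T, Acc)`. -/
structure TimedAuto (Q X : Type*) where
  init : Q
  trans : Set (Q × Guard X × Set X × Q)
  acc : Set Q

/-- `(q,ν) →^{δ,t} (q',ν')` for a transition `t = (q,g,R,q')` of the automaton. -/
def TimedAuto.cstep {Q X : Type*} (A : TimedAuto Q X) (t : Q × Guard X × Set X × Q)
    (δ : ℝ) (c c' : Q × Val X) : Prop :=
  t ∈ A.trans ∧ c.1 = t.1 ∧ c'.1 = t.2.2.2 ∧ step t.2.1 t.2.2.1 δ c.2 c'.2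

/-- Pointwise minimum of two distance graphs. -/
def minG {X : Type*} (G₁ G₂ : DGraph X) : DGraph X :=
  fun a b => if (G₁ a b).lt (G₂ a b) then G₁ a b else G₂ a b

/-! ### Auxiliary lemmas -/

lemma Weight.lt_trans' {a b c : Weight} (h1 : a.lt b) (h2 : b.lt c) : a.lt c := by
  obtain ⟨sa, va⟩ := a; obtain ⟨sb, vb⟩ := b; obtain ⟨sc, vc⟩ := c
  cases va <;> cases vb <;> cases vc <;> cases sa <;> cases sb <;> cases sc <;>
    simp_all [Weight.lt, ovLt] <;> omega

lemma Weight.lt_of_lt_of_le {a b c : Weight} (h1 : a.lt b) (h2 : b.le c) : a.lt c := by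
  rcases h2 with h2 | rfl
  · exact Weight.lt_trans' h1 h2
  · exact h1

lemma Weight.lt_of_le_of_lt {a b c : Weight} (h1 : a.le b) (h2 : b.lt c) : a.lt c := by
  rcases h1 with h1 | rfl
  · exact Weight.lt_trans' h1 h2
  · exact h2

lemma Weight.le_of_not_lt {a b : Weight} (h : ¬ a.lt b) : b.le a := by
  obtain ⟨sa, va⟩ := a; obtain ⟨sb, vb⟩ := b
  cases va <;> cases vb <;> cases sa <;> cases sb <;>
    simp_all [Weight.lt, Weight.le, ovLt, Weight.mk.injEq] <;> omega

lemma minG_le_left {X : Type*} (G₁ G₂ : DGraph X) (a b : Vtx X) :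
    (minG G₁ G₂ a b).le (G₁ a b) := by
  unfold minG
  by_cases h : (G₁ a b).lt (G₂ a b)
  · simp [h, Weight.le]
  · simpa [h] using Weight.le_of_not_lt h

lemma minG_le_right {X : Type*} (G₁ G₂ : DGraph X) (a b : Vtx X) :
    (minG G₁ G₂ a b).le (G₂ a b) := by
  unfold minG
  by_cases h : (G₁ a b).lt (G₂ a b)
  · simp [h, Weight.le, Or.inl h]
  · simp [h, Weight.le]

/-- Pure weight arithmetic: if `p, q` are finite weights whose sum is `(≤,0)`
(or `(<,1)` with both strict), then anything strictly below `p` plus anything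
at most `q` is at most `(<,0)`. -/
lemma key_weight {p q w w' : Weight} {a b : ℤ} (hp : p.val = some a) (hq : q.val = some b)
    (hc : (p.strict = false ∧ a + b ≤ 0) ∨
          (p.strict = true ∧ q.strict = true ∧ a + b ≤ 1))
    (hw : w.lt p) (hw' : w'.le q) : (w.add w').le (wlt 0) := by
  obtain ⟨sp, vp⟩ := p; obtain ⟨sq, vq⟩ := q
  obtain ⟨sw, vw⟩ := w; obtain ⟨sw', vw'⟩ := w'
  simp only at hp hq; subst hp; subst hq
  cases vw <;> cases vw' <;> cases sw <;> cases sw' <;> cases sp <;> cases sq <;>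
    simp_all [Weight.lt, Weight.le, Weight.add, ovLt, ovAdd, wlt, Weight.mk.injEq] <;>
    omega

/-- In a region, every clock that is bounded over the region is in fact bounded by `α`. -/
lemma bounded_le_alpha {X : Type*} (α : X → ℕ) (R : Set (Val X))
    (hR : IsRegion α R) (x : X) (h : ∃ c : ℕ, ∀ v ∈ R, v x ≤ (c : ℝ)) :
    ∀ v ∈ R, v x ≤ (α x : ℝ) := by
  obtain ⟨c, hc⟩ := h
  obtain ⟨v₀, hv₀n, rfl⟩ := hR
  rintro v ⟨hvn, hreg⟩
  by_contra hgt
  push_neg at hgt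
  -- `α x < v x`; pump `v x` above `c` to contradict boundedness
  set u : Val X := Function.update v x (v x + (c : ℝ) + 1) with hu
  have hux : u x = v x + (c : ℝ) + 1 := by simp [hu]
  have huy : ∀ y, y ≠ x → u y = v y := by
    intro y hy; simp [hu, Function.update_of_ne hy]
  have hv0x : (α x : ℝ) < v₀ x := by
    rcases hreg.1 x with ⟨h1, _⟩ | ⟨hfl, hfr⟩
    · exact h1
    · -- floors equal; since `α x < v x`, also `α x < v₀ x`
      by_contra hle
      push_neg at hle
      have hfloor : (α x : ℤ) ≤ ⌊v x⌋ := by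
        exact_mod_cast Int.le_floor.mpr (by exact_mod_cast hgt.le)
      have hfloor0 : ⌊v₀ x⌋ ≤ (α x : ℤ) := by
        simpa using Int.floor_mono hle
      have heq : ⌊v₀ x⌋ = (α x : ℤ) := le_antisymm hfloor0 (hfl ▸ hfloor)
      have hfr0 : Int.fract (v₀ x) = 0 := by
        have h1 : v₀ x ≤ (α x : ℝ) := by exact_mod_cast hle
        have h2 : (α x : ℝ) ≤ v₀ x := by
          have := Int.floor_le (v₀ x); rw [heq] at this; exact_mod_cast this
        have : v₀ x = (α x : ℝ) := le_antisymm h1 h2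
        rw [this]; simp [Int.fract]
      have hfrv : Int.fract (v x) = 0 := hfr.1 hfr0
      have : v x = (⌊v x⌋ : ℝ) := by
        have := Int.floor_add_fract (v x); rw [hfrv] at this; linarith
      rw [← hfl, heq] at this
      rw [this] at hgt; exact absurd hgt (by simp)
  have humem : u ∈ {w | Nonneg w ∧ regEq α v₀ w} := by
    constructor
    · intro y
      by_cases hy : y = x
      · subst hy; rw [hux]; have := hvn y; positivity
      · rw [huy y hy]; exact hvn y
    · constructor
      · intro y
        by_cases hy : y = x
        · subst hy
          left
          refine ⟨hv0x, ?_⟩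
          rw [hux]
          have hc0 : (0 : ℝ) ≤ (c : ℝ) := by positivity
          linarith
        · rw [huy y hy]
          exact hreg.1 y
      · intro y z hy hz
        have hyx : y ≠ x := by rintro rfl; exact absurd hy (not_le.mpr hv0x)
        have hzx : z ≠ x := by rintro rfl; exact absurd hz (not_le.mpr hv0x)
        rw [huy y hyx, huy z hzx]
        exact hreg.2 y z hy hz
  have := hc u humem
  rw [hux] at this
  have := hvn x
  linarith

/-- The structure of differences of two bounded clocks over a region:
there are finite bounding weights `p` (for `x₂ − x₁`) and `q` (for `x₁ − x₂`)
summing to `(≤,0)` or, both strict, to `(<,1)`. -/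
lemma region_diff_bounds {X : Type*} (α : X → ℕ) (R : Set (Val X))
    (hR : IsRegion α R) (x₁ x₂ : X)
    (h1 : ∃ c : ℕ, ∀ v ∈ R, v x₁ ≤ (c : ℝ))
    (h2 : ∃ c : ℕ, ∀ v ∈ R, v x₂ ≤ (c : ℝ)) :
    ∃ (p q : Weight) (a b : ℤ), p.val = some a ∧ q.val = some b ∧
      ((p.strict = false ∧ a + b ≤ 0) ∨
        (p.strict = true ∧ q.strict = true ∧ a + b ≤ 1)) ∧
      Bounds R (some x₁) (some x₂) p ∧ Bounds R (some x₂) (some x₁) q := by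
  have hb1 := bounded_le_alpha α R hR x₁ h1
  have hb2 := bounded_le_alpha α R hR x₂ h2
  obtain ⟨v₀, hv₀n, hRdef⟩ := hR
  have hv₀mem : v₀ ∈ R := by
    rw [hRdef]
    exact ⟨hv₀n, fun x => Or.inr ⟨rfl, Iff.rfl⟩, fun x y _ _ => Iff.rfl⟩
  have hba1 : v₀ x₁ ≤ (α x₁ : ℝ) := hb1 v₀ hv₀mem
  have hba2 : v₀ x₂ ≤ (α x₂ : ℝ) := hb2 v₀ hv₀mem
  set d : ℤ := ⌊v₀ x₂⌋ - ⌊v₀ x₁⌋ with hd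
  -- common facts about any `u ∈ R`
  have hfacts : ∀ u ∈ R, ⌊u x₁⌋ = ⌊v₀ x₁⌋ ∧ ⌊u x₂⌋ = ⌊v₀ x₂⌋ ∧
      (Int.fract (v₀ x₁) ≤ Int.fract (v₀ x₂) ↔ Int.fract (u x₁) ≤ Int.fract (u x₂)) ∧
      (Int.fract (v₀ x₂) ≤ Int.fract (v₀ x₁) ↔ Int.fract (u x₂) ≤ Int.fract (u x₁)) := by
    intro u humem
    rw [hRdef] at humem
    obtain ⟨hun, hreg⟩ := humem
    have hf1 : ⌊u x₁⌋ = ⌊v₀ x₁⌋ := by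
      rcases hreg.1 x₁ with ⟨ha, _⟩ | ⟨hfl, _⟩
      · exact absurd hba1 (not_le.mpr ha)
      · exact hfl.symm
    have hf2 : ⌊u x₂⌋ = ⌊v₀ x₂⌋ := by
      rcases hreg.1 x₂ with ⟨ha, _⟩ | ⟨hfl, _⟩
      · exact absurd hba2 (not_le.mpr ha)
      · exact hfl.symm
    exact ⟨hf1, hf2, hreg.2 x₁ x₂ hba1 hba2, hreg.2 x₂ x₁ hba2 hba1⟩
  have hdecomp : ∀ u : Val X, ∀ y : X,
      u y = (⌊u y⌋ : ℝ) + Int.fract (u y) := fun u y => (Int.floor_add_fract (u y)).symm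
  rcases lt_trichotomy (Int.fract (v₀ x₁)) (Int.fract (v₀ x₂)) with hlt | heq | hgt
  · -- fract v₀ x₁ < fract v₀ x₂ : open diagonal, differences in (d, d+1)
    refine ⟨wlt (d + 1), wlt (-d), d + 1, -d, rfl, rfl,
      Or.inr ⟨rfl, rfl, by omega⟩, ?_, ?_⟩ <;>
    · intro u humem
      obtain ⟨hf1, hf2, hiff, hiff'⟩ := hfacts u humem
      have hflt : Int.fract (u x₁) < Int.fract (u x₂) := by
        rcases lt_or_ge (Int.fract (u x₁)) (Int.fract (u x₂)) with h | h
        · exact h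
        · exact absurd (hiff'.mpr h) (not_le.mpr hlt)
      have e1 := hdecomp u x₁
      have e2 := hdecomp u x₂
      have hfr1 := Int.fract_nonneg (u x₁)
      have hfr2 := Int.fract_lt_one (u x₂)
      have hfr1' := Int.fract_lt_one (u x₁)
      have hfr2' := Int.fract_nonneg (u x₂)
      simp only [Weight.sat, wlt, extV]
      rw [e1, e2, hf1, hf2, hd]
      push_cast
      linarith
  · -- equal fractional parts: differences constantly `d`
    refine ⟨wle d, wle (-d), d, -d, rfl, rfl, Or.inl ⟨rfl, by omega⟩, ?_, ?_⟩ <;>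
    · intro u humem
      obtain ⟨hf1, hf2, hiff, hiff'⟩ := hfacts u humem
      have hfeq : Int.fract (u x₁) = Int.fract (u x₂) :=
        le_antisymm (hiff.mp heq.le) (hiff'.mp heq.ge)
      have e1 := hdecomp u x₁
      have e2 := hdecomp u x₂
      simp only [Weight.sat, wle, extV]
      rw [e1, e2, hf1, hf2, hfeq, hd]
      push_cast
      linarith
  · -- fract v₀ x₂ < fract v₀ x₁ : differences in (d-1, d)
    refine ⟨wlt d, wlt (1 - d), d, 1 - d, rfl, rfl,
      Or.inr ⟨rfl, rfl, by omega⟩, ?_, ?_⟩ <;>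
    · intro u humem
      obtain ⟨hf1, hf2, hiff, hiff'⟩ := hfacts u humem
      have hflt : Int.fract (u x₂) < Int.fract (u x₁) := by
        rcases lt_or_ge (Int.fract (u x₂)) (Int.fract (u x₁)) with h | h
        · exact h
        · exact absurd (hiff.mpr h) (not_le.mpr hgt)
      have e1 := hdecomp u x₁
      have e2 := hdecomp u x₂
      have hfr1 := Int.fract_nonneg (u x₁)
      have hfr2 := Int.fract_lt_one (u x₂)
      have hfr1' := Int.fract_lt_one (u x₁)
      have hfr2' := Int.fract_nonneg (u x₂)
      simp only [Weight.sat, wlt, extV]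
      rw [e1, e2, hf1, hf2, hd]
      push_cast
      linarith

/-- If `x₁, x₂` are bounded in the region `R` and in `min(G_R, G)`
the weight of the edge `x₁ → x₂` comes from `G` (is strictly smaller than in `G_R`),
then `x₁ → x₂ → x₁` is a negative cycle in `min(G_R, G)`. -/
theorem stmt5 {X : Type*} [Fintype X] (α : X → ℕ) (R : Set (Val X))
    (hR : IsRegion α R) (GR : DGraph X) (hGR : IsCanonGraph GR R)
    (x₁ x₂ : X)
    (h1 : ∃ c : ℕ, ∀ v ∈ R, v x₁ ≤ (c : ℝ))
    (h2 : ∃ c : ℕ, ∀ v ∈ R, v x₂ ≤ (c : ℝ))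
    (G : DGraph X)
    (hedge : (G (some x₁) (some x₂)).lt (GR (some x₁) (some x₂))) :
    ((minG GR G (some x₁) (some x₂)).add (minG GR G (some x₂) (some x₁))).le (wlt 0) := by
  obtain ⟨p, q, a, b, hp, hq, hc, hBp, hBq⟩ := region_diff_bounds α R hR x₁ x₂ h1 h2
  have hGRp : (GR (some x₁) (some x₂)).le p := hGR.2 _ _ _ hBp
  have hGRq : (GR (some x₂) (some x₁)).le q := hGR.2 _ _ _ hBq
  have hwlt : (minG GR G (some x₁) (some x₂)).lt p :=
    Weight.lt_of_lt_of_le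
      (Weight.lt_of_le_of_lt (minG_le_right GR G (some x₁) (some x₂)) hedge) hGRp
  have hwle : (minG GR G (some x₂) (some x₁)).le q := by
    rcases minG_le_left GR G (some x₂) (some x₁) with h | h
    · exact Or.inl (Weight.lt_of_lt_of_le h hGRq)
    · rw [h]; exact hGRq
  exact key_weight hp hq hc hwlt hwle

end TAform

end
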